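/- The combinatorial core of the NP-hardness reduction: for the Set Cover gadget, a subcollection S' ⊆ S covers U if and only if the corresponding query set {q_s : s ∈ S'} completely separates the type set T(U) = {τ_∅} ∪ {τ_e : e ∈ U}; in particular, if some element e is uncovered by S', then τ_e and τ_∅ lie in the same cell of every query in S', so the common refinement cell of τ_∅ is not a singleton. -/

import Mathlib

/-- The cell of the partition query `q_s` (for a subset `s ⊆ U`) containing receiver
type `τ` in the Set-Cover gadget: the types are `Option U`, where `none` is `τ_∅` and
`some e` is `τ_e`.  Query `q_s` has singleton cells `{τ_e}` for `e ∈ s` and one big cell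
consisting of `τ_∅` together with all `τ_e` for `e ∉ s`. -/
def cellQ {U : Type} (s : Set U) (τ : Option U) : Set (Option U) :=
  {τ' | (∃ e ∈ s, τ = some e ∧ τ' = τ) ∨
    ((¬ ∃ e ∈ s, τ = some e) ∧ ¬ ∃ e ∈ s, τ' = some e)}

/-- Combinatorial core of the NP-hardness reduction: a subcollection `S'` covers `U`
iff the corresponding query set `{q_s : s ∈ S'}` completely separates the type set
`T(U) = {τ_∅} ∪ {τ_e : e ∈ U}`; in particular, if some element `e` is uncovered by
`S'`, then `τ_e` lies in the same cell as `τ_∅` for every query of `S'`, so the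
common-refinement cell of `τ_∅` is not a singleton. -/
theorem stmt11 (U : Type) (S' : Set (Set U)) :
    ((∀ e : U, ∃ s ∈ S', e ∈ s) ↔
      ∀ τ : Option U, (⋂ s ∈ S', cellQ s τ) = {τ}) ∧
    (∀ e : U, (∀ s ∈ S', e ∉ s) →
      (∀ s ∈ S', some e ∈ cellQ s none) ∧
      (⋂ s ∈ S', cellQ s none) ≠ {(none : Option U)}) := by
  have hself : ∀ (s : Set U) (τ : Option U), τ ∈ cellQ s τ := by
    intro s τ
    by_cases h : ∃ e ∈ s, τ = some e
    · obtain ⟨e, he, hτ⟩ := h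
      exact Or.inl ⟨e, he, hτ, rfl⟩
    · exact Or.inr ⟨h, h⟩
  constructor
  · constructor
    · intro hcov τ
      apply Set.eq_singleton_iff_unique_mem.mpr
      refine ⟨Set.mem_biInter fun s _ => hself s τ, ?_⟩
      intro τ' hτ'
      match τ, τ' with
      | none, none => rfl
      | some e, none =>
        obtain ⟨s, hs, hes⟩ := hcov e
        have := Set.mem_iInter₂.mp hτ' s hs
        rcases this with ⟨e', _, _, h2⟩ | ⟨h1, _⟩
        · exact h2
        · exact absurd ⟨e, hes, rfl⟩ h1
      | some e, some e' =>
        obtain ⟨s, hs, hes⟩ := hcov e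
        have := Set.mem_iInter₂.mp hτ' s hs
        rcases this with ⟨_, _, _, h2⟩ | ⟨h1, _⟩
        · exact h2
        · exact absurd ⟨e, hes, rfl⟩ h1
      | none, some e' =>
        obtain ⟨s, hs, hes⟩ := hcov e'
        have := Set.mem_iInter₂.mp hτ' s hs
        rcases this with ⟨_, _, h2, _⟩ | ⟨_, h2⟩
        · exact absurd h2 (by simp)
        · exact absurd ⟨e', hes, rfl⟩ h2
    · intro hsep e
      have h := hsep none
      by_contra hc
      push_neg at hc
      have hmem : some e ∈ (⋂ s ∈ S', cellQ s none) := by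
        refine Set.mem_biInter fun s hs => Or.inr ⟨?_, ?_⟩
        · rintro ⟨e', _, h'⟩; exact absurd h' (by simp)
        · rintro ⟨e', he', h'⟩
          exact hc s hs (Option.some_injective _ h' ▸ he')
      rw [h] at hmem
      exact absurd (Set.mem_singleton_iff.mp hmem) (by simp)
  · intro e he
    have hmem : ∀ s ∈ S', some e ∈ cellQ s none := by
      intro s hs
      refine Or.inr ⟨?_, ?_⟩
      · rintro ⟨e', _, h'⟩; exact absurd h' (by simp)
      · rintro ⟨e', he', h'⟩
        exact he s hs (Option.some_injective _ h' ▸ he')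
    refine ⟨hmem, fun h => ?_⟩
    have : some e ∈ (⋂ s ∈ S', cellQ s none) := Set.mem_biInter hmem
    rw [h] at this
    exact absurd (Set.mem_singleton_iff.mp this) (by simp)
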